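/- H(f_1,…,f_K) ≤ (1 − Σ_{s=1}^K p_s²)/2, and equality holds if and only if f_1 = f_2 = ⋯ = f_K Lebesgue-almost everywhere on ℝ^d. (Note that the right-hand side equals H(f,…,f) for any common probability density f.) -/

import Mathlib

open Finset MeasureTheory


lemma sq_sum_aux {K : ℕ} (a : Fin K → ℝ) :
    (∑ s, a s) ^ 2 = (∑ s, a s ^ 2)
      + 2 * ∑ q ∈ univ.filter (fun q : Fin K × Fin K => q.1 < q.2), a q.1 * a q.2 := by
  classical
  have h1 : (∑ s, a s) ^ 2 = ∑ q ∈ (univ : Finset (Fin K × Fin K)), a q.1 * a q.2 := by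
    rw [sq, Finset.sum_mul_sum, ← Finset.univ_product_univ, Finset.sum_product]
  rw [h1, ← Finset.sum_filter_add_sum_filter_not univ (fun q : Fin K × Fin K => q.1 < q.2)]
  have h2 : univ.filter (fun q : Fin K × Fin K => ¬ q.1 < q.2)
      = univ.filter (fun q : Fin K × Fin K => q.2 < q.1) ∪ univ.filter (fun q : Fin K × Fin K => q.1 = q.2) := by
    ext q; simp; omega
  have hdisj : Disjoint (univ.filter (fun q : Fin K × Fin K => q.2 < q.1))
      (univ.filter (fun q : Fin K × Fin K => q.1 = q.2)) := by
    rw [Finset.disjoint_left]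
    intro q hq hq'; simp at hq hq'; omega
  have h3 : ∑ q ∈ univ.filter (fun q : Fin K × Fin K => q.2 < q.1), a q.1 * a q.2
      = ∑ q ∈ univ.filter (fun q : Fin K × Fin K => q.1 < q.2), a q.1 * a q.2 := by
    apply Finset.sum_nbij' (i := Prod.swap) (j := Prod.swap) <;> simp [mul_comm]
  have h4 : ∑ q ∈ univ.filter (fun q : Fin K × Fin K => q.1 = q.2), a q.1 * a q.2
      = ∑ s, a s ^ 2 := by
    apply Finset.sum_nbij' (i := Prod.fst) (j := fun s => (s, s))
    all_goals simp [sq]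
  rw [h2, Finset.sum_union hdisj, h3, h4]; ring

/-- `H(f_1,…,f_K) = Σ_{s<t} p_s p_t ∫ f_s f_t/φ ≤ (1 - Σ_s p_s²)/2`, with
equality iff `f_1 = ⋯ = f_K` Lebesgue-almost everywhere. Here `φ = Σ_s p_s f_s`, and the
integrand is `0` on `{φ = 0}` (Lean's convention `x/0 = 0`). -/
theorem stmt15 (d K : ℕ) (hd : 1 ≤ d) (hK : 2 ≤ K)
    (f : Fin K → (Fin d → ℝ) → ℝ) (hmeas : ∀ s, Measurable (f s))
    (hnn : ∀ s z, 0 ≤ f s z) (hint : ∀ s, ∫ z : Fin d → ℝ, f s z = 1)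
    (p : Fin K → ℝ) (hp : ∀ s, p s ∈ Set.Ioo (0 : ℝ) 1) (hps : ∑ s, p s = 1) :
    (∑ q ∈ univ.filter (fun q : Fin K × Fin K => q.1 < q.2),
        p q.1 * p q.2 * ∫ z : Fin d → ℝ, f q.1 z * f q.2 z / (∑ s, p s * f s z))
      ≤ (1 - ∑ s, (p s) ^ 2) / 2
    ∧ ((∑ q ∈ univ.filter (fun q : Fin K × Fin K => q.1 < q.2),
          p q.1 * p q.2 * ∫ z : Fin d → ℝ, f q.1 z * f q.2 z / (∑ s, p s * f s z))
        = (1 - ∑ s, (p s) ^ 2) / 2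
      ↔ ∀ s t : Fin K, f s =ᵐ[volume] f t) := by
  classical
  set φ : (Fin d → ℝ) → ℝ := fun z => ∑ s, p s * f s z with hφdef
  have hpp : ∀ s, 0 < p s := fun s => (hp s).1
  have hφm : Measurable φ := by
    apply Finset.measurable_sum
    exact fun s _ => (hmeas s).const_mul (p s)
  have hφnn : ∀ z, 0 ≤ φ z :=
    fun z => Finset.sum_nonneg fun s _ => mul_nonneg (hpp s).le (hnn s z)
  have hle : ∀ s z, p s * f s z ≤ φ z := fun s z =>
    Finset.single_le_sum (fun t _ => mul_nonneg (hpp t).le (hnn t z)) (mem_univ s)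
  have hf0 : ∀ s z, φ z = 0 → f s z = 0 := by
    intro s z h
    have h1 := hle s z
    nlinarith [hpp s, hnn s z]
  have hfint : ∀ s, Integrable (f s) := by
    intro s
    by_contra h
    have h2 := hint s
    rw [integral_undef h] at h2
    exact one_ne_zero h2.symm
  have hφint : Integrable φ := by
    apply integrable_finset_sum
    exact fun s _ => (hfint s).const_mul (p s)
  have hφ1 : ∫ z, φ z = 1 := by
    rw [hφdef]
    rw [integral_finset_sum _ (fun s _ => (hfint s).const_mul (p s))]
    simp_rw [integral_const_mul, hint]
    simpa using hps
  have hgnn : ∀ s t z, 0 ≤ f s z * f t z / φ z := fun s t z =>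
    div_nonneg (mul_nonneg (hnn s z) (hnn t z)) (hφnn z)
  have hbd : ∀ s t z, f s z * f t z / φ z ≤ f s z / p t := by
    intro s t z
    rcases eq_or_lt_of_le (hφnn z) with h | h
    · rw [← h, div_zero]
      exact div_nonneg (hnn s z) (hpp t).le
    · rw [div_le_div_iff₀ h (hpp t)]
      have := hle t z
      nlinarith [hnn s z, hnn t z, hpp t]
  have hgint : ∀ s t, Integrable (fun z => f s z * f t z / φ z) := by
    intro s t
    apply Integrable.mono' (g := fun z => (p t)⁻¹ * f s z) ((hfint s).const_mul _)
    · exact (((hmeas s).mul (hmeas t)).div hφm).aestronglyMeasurable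
    · filter_upwards with z
      rw [Real.norm_of_nonneg (hgnn s t z)]
      calc f s z * f t z / φ z ≤ f s z / p t := hbd s t z
        _ = (p t)⁻¹ * f s z := by rw [div_eq_inv_mul]
  -- pointwise identity
  have hpt : ∀ z, (∑ q ∈ univ.filter (fun q : Fin K × Fin K => q.1 < q.2),
      p q.1 * p q.2 * (f q.1 z * f q.2 z / φ z))
      = (φ z - ∑ s, p s * p s * (f s z * f s z / φ z)) / 2 := by
    intro z
    rcases eq_or_lt_of_le (hφnn z) with h | h
    · have h0 : ∀ s, f s z = 0 := fun s => hf0 s z h.symm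
      simp [h0, ← h]
    · have hb : φ z ≠ 0 := h.ne'
      have key := sq_sum_aux (fun s => p s * f s z)
      have hsum : (∑ s, p s * f s z) = φ z := rfl
      rw [hsum] at key
      have e1 : ∀ q : Fin K × Fin K, p q.1 * p q.2 * (f q.1 z * f q.2 z / φ z)
          = (p q.1 * f q.1 z) * (p q.2 * f q.2 z) / φ z := fun q => by ring
      have e2 : ∀ s : Fin K, p s * p s * (f s z * f s z / φ z)
          = (p s * f s z) ^ 2 / φ z := fun s => by ring
      simp_rw [e1, e2, ← Finset.sum_div]
      rw [div_eq_div_iff hb (by norm_num : (2:ℝ) ≠ 0)]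
      field_simp
      simp only [mul_pow, ← mul_assoc] at key
      nlinarith [key]
  -- integral identity
  set I : Fin K → ℝ := fun s => ∫ z, f s z * f s z / φ z with hIdef
  have hdiagint : Integrable (fun z => ∑ s, p s * p s * (f s z * f s z / φ z)) :=
    integrable_finset_sum _ (fun s _ => ((hgint s s).const_mul _))
  have hH : (∑ q ∈ univ.filter (fun q : Fin K × Fin K => q.1 < q.2),
        p q.1 * p q.2 * ∫ z, f q.1 z * f q.2 z / φ z)
      = (1 - ∑ s, p s * p s * I s) / 2 := by
    have e1 : ∀ q ∈ univ.filter (fun q : Fin K × Fin K => q.1 < q.2),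
        p q.1 * p q.2 * ∫ z, f q.1 z * f q.2 z / φ z
        = ∫ z, p q.1 * p q.2 * (f q.1 z * f q.2 z / φ z) := by
      intro q _; rw [integral_const_mul]
    rw [Finset.sum_congr rfl e1,
      ← integral_finset_sum _ (fun q _ => ((hgint q.1 q.2).const_mul _))]
    simp_rw [hpt]
    rw [integral_div, integral_sub hφint hdiagint, hφ1,
        integral_finset_sum _ (fun s _ => (hgint s s).const_mul _)]
    simp_rw [integral_const_mul]
    rfl
  -- properties of I
  have haux : ∀ s, Integrable (fun z => f s z * f s z / φ z - (2 * f s z - φ z))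
      ∧ (∀ z, 0 ≤ f s z * f s z / φ z - (2 * f s z - φ z))
      ∧ ∫ z, (f s z * f s z / φ z - (2 * f s z - φ z)) = I s - 1 := by
    intro s
    have hint2 : Integrable (fun z => 2 * f s z - φ z) := ((hfint s).const_mul 2).sub hφint
    refine ⟨(hgint s s).sub hint2, ?_, ?_⟩
    · intro z
      rcases eq_or_lt_of_le (hφnn z) with h | h
      · have h0 : f s z = 0 := hf0 s z h.symm
        simp [h0, ← h]
      · have hb : φ z ≠ 0 := h.ne'
        rw [sub_nonneg, le_div_iff₀ h]
        nlinarith [sq_nonneg (f s z - φ z)]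
    · have hint3 : Integrable (fun z => 2 * f s z) := (hfint s).const_mul 2
      rw [integral_sub (hgint s s) hint2, integral_sub hint3 hφint,
        integral_const_mul, hint, hφ1]
      norm_num
      rfl
  have hI1 : ∀ s, 1 ≤ I s := by
    intro s
    obtain ⟨h1, h2, h3⟩ := haux s
    have := integral_nonneg (μ := (volume : Measure (Fin d → ℝ)))
      (show 0 ≤ (fun z => f s z * f s z / φ z - (2 * f s z - φ z)) from h2)
    rw [h3] at this; linarith
  have hIiff : ∀ s, I s = 1 ↔ f s =ᵐ[volume] φ := by
    intro s
    obtain ⟨h1, h2, h3⟩ := haux s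
    constructor
    · intro hIs
      have h4 : ∫ z, (f s z * f s z / φ z - (2 * f s z - φ z)) = 0 := by rw [h3, hIs]; ring
      obtain ⟨h1', h2', h3'⟩ := haux s
      have h5 := (integral_eq_zero_iff_of_nonneg h2 h1).1 h4
      filter_upwards [h5] with z hz
      simp only [Pi.zero_apply] at hz
      rcases eq_or_lt_of_le (hφnn z) with h | h
      · rw [hf0 s z h.symm, ← h]
      · have hb : φ z ≠ 0 := h.ne'
        have h6 : f s z * f s z = (2 * f s z - φ z) * φ z := by
          rw [sub_eq_zero] at hz
          field_simp at hz
          linarith [hz]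
        have h7 : (f s z - φ z) ^ 2 = 0 := by nlinarith
        have := pow_eq_zero_iff (n := 2) (by norm_num) |>.1 h7
        linarith [sub_eq_zero.1 this]
    · intro hae
      have hcong : (fun z => f s z * f s z / φ z) =ᵐ[volume] φ := by
        filter_upwards [hae] with z hz
        rw [hz]
        rcases eq_or_ne (φ z) 0 with h | h
        · simp [h]
        · rw [mul_div_assoc, div_self h, mul_one]
      show (∫ z, f s z * f s z / φ z) = 1
      rw [integral_congr_ae hcong, hφ1]
  -- assemble
  simp only [hφdef] at hH
  rw [hH]
  have hple : ∑ s, (p s) ^ 2 ≤ ∑ s, p s * p s * I s :=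
    Finset.sum_le_sum fun s _ => by nlinarith [hI1 s, hpp s]
  constructor
  · linarith
  constructor
  · intro he
    have h2 : ∀ s, I s = 1 := by
      by_contra hc
      push_neg at hc
      obtain ⟨s0, hs0⟩ := hc
      have hlt : 1 < I s0 := lt_of_le_of_ne (hI1 s0) (Ne.symm hs0)
      have : ∑ s, (p s) ^ 2 < ∑ s, p s * p s * I s := by
        apply Finset.sum_lt_sum (fun s _ => by nlinarith [hI1 s, hpp s])
        refine ⟨s0, mem_univ s0, ?_⟩
        have hq := mul_pos (mul_pos (hpp s0) (hpp s0)) (sub_pos.2 hlt)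
        nlinarith [hq]
      linarith
    intro s t
    exact ((hIiff s).1 (h2 s)).trans ((hIiff t).1 (h2 t)).symm
  · intro hall
    have hfφ : ∀ s, f s =ᵐ[volume] φ := by
      intro s
      have hT : ∀ᵐ z ∂(volume : Measure (Fin d → ℝ)), ∀ t, f t z = f s z :=
        (MeasureTheory.ae_all_iff).2 fun t => hall t s
      filter_upwards [hT] with z hz
      show f s z = φ z
      show f s z = ∑ t, p t * f t z
      rw [Finset.sum_congr rfl (fun t _ => by rw [hz t]), ← Finset.sum_mul, hps, one_mul]
    have h2 : ∀ s, I s = 1 := fun s => (hIiff s).2 (hfφ s)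
    simp_rw [h2, mul_one, ← sq]
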